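/- The quotient ring End(A)/I contains a family of cardinality continuum of nonzero pairwise orthogonal idempotents: there is a set E ⊆ End(A)/I with #E = 𝔠 such that every e ∈ E satisfies e ≠ 0 and e·e = e, and e·f = 0 for all distinct e, f ∈ E. -/

import Mathlib

/-- The two-sided ideal of finite-image endomorphisms of the countable elementary
abelian `p`-group `ℕ →₀ ZMod p`. -/
noncomputable def finRangeTwoSidedIdeal (p : ℕ) : TwoSidedIdeal (Module.End (ZMod p) (ℕ →₀ ZMod p)) :=
  TwoSidedIdeal.mk'
    {α : Module.End (ZMod p) (ℕ →₀ ZMod p) | (Set.range α).Finite}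
    ((Set.finite_singleton 0).subset (by rintro _ ⟨x, rfl⟩; simp))
    (fun {a b} ha hb => (Set.Finite.image2 (· + ·) ha hb).subset
      (by rintro _ ⟨x, rfl⟩
          exact Set.mem_image2_of_mem ⟨x, rfl⟩ ⟨x, rfl⟩))
    (fun {a} ha => (ha.image Neg.neg).subset
      (by rintro _ ⟨x, rfl⟩; exact ⟨a x, ⟨x, rfl⟩, rfl⟩))
    (fun {x y} hy => (hy.image x).subset
      (by rintro _ ⟨m, rfl⟩; exact ⟨y m, ⟨m, rfl⟩, rfl⟩))
    (fun {x y} hx => hx.subset (by rintro _ ⟨m, rfl⟩; exact ⟨y m, rfl⟩))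

open scoped Classical

lemma mem_finRangeTwoSidedIdeal (p : ℕ) (α : Module.End (ZMod p) (ℕ →₀ ZMod p)) :
    α ∈ finRangeTwoSidedIdeal p ↔ (Set.range α).Finite :=
  TwoSidedIdeal.mem_mk' _ _ _ _ _ _ _

/-- Projection onto the coordinates in `S`. -/
noncomputable def projMap (p : ℕ) (S : Set ℕ) : Module.End (ZMod p) (ℕ →₀ ZMod p) :=
  Finsupp.lsum (ZMod p) (fun n => if n ∈ S then Finsupp.lsingle n else 0)

lemma projMap_single (p : ℕ) (S : Set ℕ) (a : ℕ) (b : ZMod p) :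
    projMap p S (Finsupp.single a b) =
      if a ∈ S then Finsupp.single a b else 0 := by
  rw [projMap, Finsupp.lsum_single]
  split_ifs with h <;> simp [h]

lemma projMap_mul (p : ℕ) (S T : Set ℕ) :
    projMap p S * projMap p T = projMap p (S ∩ T) := by
  apply Finsupp.lhom_ext
  intro a b
  show projMap p S (projMap p T (Finsupp.single a b)) = _
  rw [projMap_single, projMap_single]
  split_ifs with h1 h2 h3 h3 <;>
    simp_all [projMap_single, Set.mem_inter_iff]

lemma projMap_range_finite (p : ℕ) [Fact p.Prime] {S : Set ℕ} (hS : S.Finite) :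
    (Set.range (projMap p S)).Finite := by
  have hsub : Set.range (projMap p S) ⊆ (Finsupp.supported (ZMod p) (ZMod p) S : Set _) := by
    rintro _ ⟨f, rfl⟩
    induction f using Finsupp.induction_linear with
    | zero => simpa using (Finsupp.supported (ZMod p) (ZMod p) S).zero_mem
    | add f g hf hg => rw [map_add]; exact (Finsupp.supported (ZMod p) (ZMod p) S).add_mem hf hg
    | single a b =>
      rw [projMap_single]
      split_ifs with h
      · rw [SetLike.mem_coe, Finsupp.mem_supported]
        intro i hi
        have hi' := Finsupp.support_single_subset (Finset.mem_coe.mp hi)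
        simp only [Finset.mem_singleton] at hi'
        subst hi'; exact h
      · simpa using (Finsupp.supported (ZMod p) (ZMod p) S).zero_mem
  haveI := hS.to_subtype
  haveI : Finite (↥S →₀ ZMod p) := Finite.of_equiv _ Finsupp.equivFunOnFinite.symm
  haveI : Finite (Finsupp.supported (ZMod p) (ZMod p) S) :=
    Finite.of_equiv _ (Finsupp.supportedEquivFinsupp S).symm.toEquiv
  exact (Set.toFinite (Finsupp.supported (ZMod p) (ZMod p) S : Set _)).subset hsub

lemma projMap_range_infinite (p : ℕ) [Fact p.Prime] {S : Set ℕ} (hS : S.Infinite) :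
    (Set.range (projMap p S)).Infinite := by
  haveI := hS.to_subtype
  haveI : Nontrivial (ZMod p) := ZMod.nontrivial_iff.mpr (Fact.out (p := p.Prime)).ne_one
  apply Set.infinite_of_injective_forall_mem
    (f := fun n : ↥S => Finsupp.single (n : ℕ) (1 : ZMod p))
  · intro a b hab
    exact Subtype.ext (Finsupp.single_left_injective one_ne_zero hab)
  · rintro ⟨n, hn⟩
    exact ⟨Finsupp.single n 1, by rw [projMap_single, if_pos hn]⟩

lemma projMap_sub_range_infinite (p : ℕ) [Fact p.Prime] {S T : Set ℕ}
    (hS : (S \ T).Infinite) :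
    (Set.range (projMap p S - projMap p T)).Infinite := by
  haveI := hS.to_subtype
  haveI : Nontrivial (ZMod p) := ZMod.nontrivial_iff.mpr (Fact.out (p := p.Prime)).ne_one
  apply Set.infinite_of_injective_forall_mem
    (f := fun n : ↥(S \ T) => Finsupp.single (n : ℕ) (1 : ZMod p))
  · intro a b hab
    exact Subtype.ext (Finsupp.single_left_injective one_ne_zero hab)
  · rintro ⟨n, hnS, hnT⟩
    refine ⟨Finsupp.single n 1, ?_⟩
    show projMap p S (Finsupp.single n 1) - projMap p T (Finsupp.single n 1) = _
    rw [projMap_single, projMap_single, if_pos hnS, if_neg hnT, sub_zero]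

/-- Code of the length-`n` prefix of `x`. -/
def prefixCode (x : ℕ → Bool) (n : ℕ) : ℕ :=
  Encodable.encode (List.ofFn fun i : Fin n => x i)

lemma prefixCode_eq_iff {x y : ℕ → Bool} {n m : ℕ}
    (h : prefixCode x n = prefixCode y m) : n = m ∧ ∀ i : Fin n, x i = y i := by
  have h' := Encodable.encode_injective h
  have hlen : n = m := by
    simpa using congrArg List.length h'
  subst hlen
  rw [List.ofFn_inj] at h'
  exact ⟨rfl, fun i => congrFun h' i⟩

/-- The set of codes of prefixes of `x`. -/
def prefixSet (x : ℕ → Bool) : Set ℕ := Set.range (prefixCode x)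

lemma prefixCode_injective (x : ℕ → Bool) : Function.Injective (prefixCode x) :=
  fun n m h => (prefixCode_eq_iff h).1

lemma prefixSet_infinite (x : ℕ → Bool) : (prefixSet x).Infinite :=
  Set.infinite_range_of_injective (prefixCode_injective x)

lemma prefixSet_inter_finite {x y : ℕ → Bool} (hxy : x ≠ y) :
    (prefixSet x ∩ prefixSet y).Finite := by
  obtain ⟨N, hN⟩ := Function.ne_iff.mp hxy
  apply ((Set.finite_Iic N).image (prefixCode x)).subset
  rintro c ⟨⟨n, rfl⟩, ⟨m, hm⟩⟩
  obtain ⟨rfl, hagree⟩ := prefixCode_eq_iff hm.symm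
  refine ⟨n, ?_, rfl⟩
  by_contra hn
  exact hN (hagree ⟨N, lt_of_not_ge hn⟩)

/-- The simple quotient ring `End(A)/I` of the endomorphism ring of a countable
elementary abelian `p`-group by the ideal of finite-image endomorphisms contains
a family of cardinality continuum of nonzero pairwise orthogonal idempotents. -/
theorem quotient_has_continuum_orthogonal_idempotents (p : ℕ) [Fact p.Prime] :
    ∃ E : Set ((finRangeTwoSidedIdeal p).ringCon.Quotient),
      Cardinal.mk E = Cardinal.continuum ∧
      (∀ e ∈ E, e ≠ 0 ∧ e * e = e) ∧
      (∀ e ∈ E, ∀ f ∈ E, e ≠ f → e * f = 0) := by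
  classical
  set c := (finRangeTwoSidedIdeal p).ringCon
  set π := c.mk' with hπ
  have hker : ∀ α : Module.End (ZMod p) (ℕ →₀ ZMod p),
      π α = 0 ↔ (Set.range α).Finite := by
    intro α
    have h1 : π α = 0 ↔ α - 0 ∈ finRangeTwoSidedIdeal p := by
      rw [show (0 : c.Quotient) = π 0 from (map_zero π).symm]
      exact Quotient.eq''.trans (TwoSidedIdeal.rel_iff _ _ _)
    rw [h1, show α - 0 = α from sub_zero α, mem_finRangeTwoSidedIdeal]
  set F : (ℕ → Bool) → c.Quotient := fun x => π (projMap p (prefixSet x)) with hF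
  have hFinj : Function.Injective F := by
    intro x y hxy
    by_contra hne
    have h2 : c (projMap p (prefixSet x)) (projMap p (prefixSet y)) := Quotient.eq''.mp hxy
    rw [TwoSidedIdeal.rel_iff, mem_finRangeTwoSidedIdeal] at h2
    have hinf : ((prefixSet x) \ (prefixSet y)).Infinite := by
      have h3 := (prefixSet_infinite x).diff (prefixSet_inter_finite hne)
      exact h3.mono (fun a ha => ⟨ha.1, fun h => ha.2 ⟨ha.1, h⟩⟩)
    exact projMap_sub_range_infinite p hinf (by exact_mod_cast h2)
  refine ⟨Set.range F, ?_, ?_, ?_⟩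
  · rw [Cardinal.mk_range_eq F hFinj]
    simp [Cardinal.mk_arrow, ← Cardinal.two_power_aleph0]
  · rintro _ ⟨x, rfl⟩
    refine ⟨?_, ?_⟩
    · show ¬ π (projMap p (prefixSet x)) = 0
      rw [hker]
      exact fun h => projMap_range_infinite p (prefixSet_infinite x) h
    · show π _ * π _ = π _
      rw [← map_mul, projMap_mul, Set.inter_self]
  · rintro _ ⟨x, rfl⟩ _ ⟨y, rfl⟩ hne
    have hxy : x ≠ y := fun h => hne (by rw [h])
    show π _ * π _ = 0
    rw [← map_mul, projMap_mul, hker]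
    exact projMap_range_finite p (prefixSet_inter_finite hxy)
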